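/- Let B be a 3×3 real matrix and define the linear map Δ: M₂(ℂ) → M₂(ℂ)⊗M₂(ℂ) by Δ(w₀I + w·σ) = w₀(I⊗I) + (Bw·σ)⊗I + I⊗(Bw·σ). Then Δ is positive (maps positive semidefinite matrices to positive semidefinite matrices) if and only if the operator norm of B satisfies ‖B‖ ≤ 1/2. -/

import Mathlib

open Matrix Complex
open scoped ComplexOrder

noncomputable def sigma1 : Matrix (Fin 2) (Fin 2) ℂ := !![0, 1; 1, 0]
noncomputable def sigma2 : Matrix (Fin 2) (Fin 2) ℂ := !![0, -I; I, 0]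
noncomputable def sigma3 : Matrix (Fin 2) (Fin 2) ℂ := !![1, 0; 0, -1]

noncomputable def pauli (w : Fin 3 → ℂ) : Matrix (Fin 2) (Fin 2) ℂ :=
  w 0 • sigma1 + w 1 • sigma2 + w 2 • sigma3

open Kronecker

lemma pauli_apply (w : Fin 3 → ℂ) :
    pauli w = !![w 2, w 0 - I * w 1; w 0 + I * w 1, -(w 2)] := by
  ext i j
  fin_cases i <;> fin_cases j <;>
    simp [pauli, sigma1, sigma2, sigma3] <;> ring

lemma pauli_mul_self (a : Fin 3 → ℝ) :
    (pauli fun i => (a i : ℂ)) * (pauli fun i => (a i : ℂ))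
      = ((∑ i, a i ^ 2 : ℝ) : ℂ) • 1 := by
  rw [pauli_apply]
  ext i j
  fin_cases i <;> fin_cases j <;>
    · simp [Matrix.mul_apply, Fin.sum_univ_succ, Matrix.one_apply, Fin.sum_univ_three]
      simp [Complex.ext_iff, ← Complex.ofReal_pow]
      constructor <;> ring

lemma pauli_isHermitian (a : Fin 3 → ℝ) :
    (pauli fun i => (a i : ℂ)).IsHermitian := by
  rw [pauli_apply]
  ext i j
  fin_cases i <;> fin_cases j <;>
    simp [conjTranspose_apply, Complex.ext_iff]

lemma psd_real_smul {n : Type*} [Fintype n] {M : Matrix n n ℂ} (h : M.PosSemidef)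
    {c : ℝ} (hc : 0 ≤ c) : ((c : ℂ) • M).PosSemidef := by
  refine Matrix.PosSemidef.of_dotProduct_mulVec_nonneg ?_ ?_
  · unfold Matrix.IsHermitian
    rw [conjTranspose_smul, h.1]
    congr 1
    simp [Complex.star_def, Complex.conj_ofReal]
  · intro x
    rw [smul_mulVec, dotProduct_smul, smul_eq_mul]
    exact mul_nonneg (Complex.zero_le_real.2 hc) (h.dotProduct_mulVec_nonneg x)

lemma pauli_zero (a : Fin 3 → ℝ) (ha : ∀ i, a i = 0) :
    (pauli fun i => (a i : ℂ)) = 0 := by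
  rw [pauli_apply]
  ext i j
  fin_cases i <;> fin_cases j <;> simp [ha]

lemma psd_of_norm_le (a₀ : ℝ) (a : Fin 3 → ℝ)
    (h : Real.sqrt (∑ i, a i ^ 2) ≤ a₀) :
    ((a₀ : ℂ) • (1 : Matrix (Fin 2) (Fin 2) ℂ) + pauli fun i => (a i : ℂ)).PosSemidef := by
  set r := Real.sqrt (∑ i, a i ^ 2) with hrdef
  have hr0 : 0 ≤ r := Real.sqrt_nonneg _
  have hr2 : r ^ 2 = ∑ i, a i ^ 2 := Real.sq_sqrt (by positivity)
  have key : (((r : ℂ)) • 1 + pauli fun i => (a i : ℂ)).PosSemidef := by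
    rcases eq_or_lt_of_le hr0 with h0 | h0
    · have hsum : (∑ i, a i ^ 2) = 0 := by rw [← hr2, ← h0]; ring
      have ha : ∀ i, a i = 0 := by
        intro i
        have h1 := Finset.sum_eq_zero_iff_of_nonneg
          (fun i (_ : i ∈ Finset.univ) => sq_nonneg (a i)) |>.mp hsum i (Finset.mem_univ i)
        exact pow_eq_zero_iff (by norm_num) |>.mp h1
      rw [pauli_zero a ha, ← h0]
      simp [Matrix.PosSemidef.zero]
    · set N : Matrix (Fin 2) (Fin 2) ℂ := ((r : ℂ)) • 1 + pauli fun i => (a i : ℂ) with hN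
      have hNH : N.IsHermitian := by
        unfold Matrix.IsHermitian
        rw [hN, conjTranspose_add, conjTranspose_smul, conjTranspose_one,
          (pauli_isHermitian a)]
        congr 1
        simp [Complex.star_def, Complex.conj_ofReal]
      have hN2 : N * N = ((2 * r : ℝ) : ℂ) • N := by
        rw [hN]
        rw [mul_add, add_mul, add_mul, pauli_mul_self, ← hr2]
        push_cast
        simp only [smul_mul_assoc, mul_smul_comm, one_mul, mul_one]
        module
      have key2 : N = (((2 * r)⁻¹ : ℝ) : ℂ) • (Nᴴ * N) := by
        rw [hNH, hN2, smul_smul, ← Complex.ofReal_mul, inv_mul_cancel₀ (by positivity),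
          Complex.ofReal_one, one_smul]
      rw [key2]
      exact psd_real_smul (Matrix.posSemidef_conjTranspose_mul_self N) (by positivity)
  have heq : ((a₀ : ℂ)) • (1 : Matrix (Fin 2) (Fin 2) ℂ) + (pauli fun i => (a i : ℂ))
      = ((a₀ - r : ℝ) : ℂ) • 1 + (((r : ℂ)) • 1 + pauli fun i => (a i : ℂ)) := by
    push_cast
    module
  rw [heq]
  exact (psd_real_smul Matrix.PosSemidef.one (by linarith)).add key

lemma eig1 (v : Fin 3 → ℝ) (s : ℝ) (hs : s ^ 2 = ∑ i, v i ^ 2) :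
    (pauli fun i => (v i : ℂ)).mulVec ![(v 0 : ℂ) - I * v 1, -((v 2 : ℂ) + s)]
      = (-(s : ℂ)) • ![(v 0 : ℂ) - I * v 1, -((v 2 : ℂ) + s)] := by
  have hc : ((v 0 : ℂ)) ^ 2 + (v 1 : ℂ) ^ 2 + (v 2 : ℂ) ^ 2 = (s : ℂ) ^ 2 := by
    rw [Fin.sum_univ_three] at hs
    exact_mod_cast congrArg (fun x : ℝ => (x : ℂ)) hs.symm
  rw [pauli_apply]
  ext i
  fin_cases i
  · simp [Matrix.mulVec, dotProduct, Fin.sum_univ_succ]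
    ring
  · simp [Matrix.mulVec, dotProduct, Fin.sum_univ_succ]
    linear_combination hc - (v 1 : ℂ) ^ 2 * Complex.I_sq

lemma eig2 (v : Fin 3 → ℝ) (s : ℝ) (hs : s ^ 2 = ∑ i, v i ^ 2) :
    (pauli fun i => (v i : ℂ)).mulVec ![(s : ℂ) - v 2, -((v 0 : ℂ) + I * v 1)]
      = (-(s : ℂ)) • ![(s : ℂ) - v 2, -((v 0 : ℂ) + I * v 1)] := by
  have hc : ((v 0 : ℂ)) ^ 2 + (v 1 : ℂ) ^ 2 + (v 2 : ℂ) ^ 2 = (s : ℂ) ^ 2 := by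
    rw [Fin.sum_univ_three] at hs
    exact_mod_cast congrArg (fun x : ℝ => (x : ℂ)) hs.symm
  rw [pauli_apply]
  ext i
  fin_cases i
  · simp [Matrix.mulVec, dotProduct, Fin.sum_univ_succ]
    linear_combination (-1 : ℂ) * hc + (v 1 : ℂ) ^ 2 * Complex.I_sq
  · simp [Matrix.mulVec, dotProduct, Fin.sum_univ_succ]
    ring

lemma dot1 (v : Fin 3 → ℝ) (s : ℝ) :
    star ![(v 0 : ℂ) - I * v 1, -((v 2 : ℂ) + s)] ⬝ᵥ ![(v 0 : ℂ) - I * v 1, -((v 2 : ℂ) + s)]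
      = ((v 0 ^ 2 + v 1 ^ 2 + (v 2 + s) ^ 2 : ℝ) : ℂ) := by
  simp [dotProduct, Fin.sum_univ_succ, Complex.star_def, map_sub, _root_.map_mul, map_add,
    Complex.conj_ofReal]
  linear_combination (-1 : ℂ) * (v 1 : ℂ) ^ 2 * Complex.I_sq

lemma dot2 (v : Fin 3 → ℝ) (s : ℝ) :
    star ![(s : ℂ) - v 2, -((v 0 : ℂ) + I * v 1)] ⬝ᵥ ![(s : ℂ) - v 2, -((v 0 : ℂ) + I * v 1)]
      = ((v 0 ^ 2 + v 1 ^ 2 + (s - v 2) ^ 2 : ℝ) : ℂ) := by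
  simp [dotProduct, Fin.sum_univ_succ, Complex.star_def, map_sub, _root_.map_mul, map_add,
    Complex.conj_ofReal]
  linear_combination (-1 : ℂ) * (v 1 : ℂ) ^ 2 * Complex.I_sq

lemma psd_form_aux {n : Type*} [Fintype n] {M : Matrix n n ℂ} (hM : M.PosSemidef)
    (ψ : n → ℂ) (c m : ℝ) (hf : star ψ ⬝ᵥ M.mulVec ψ = ((c * m : ℝ) : ℂ)) (hm : 0 < m) :
    0 ≤ c := by
  have h0 := hM.dotProduct_mulVec_nonneg ψ
  rw [hf, Complex.zero_le_real] at h0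
  nlinarith


lemma kron_conjT (A B : Matrix (Fin 2) (Fin 2) ℂ) : (A ⊗ₖ B)ᴴ = Aᴴ ⊗ₖ Bᴴ := by
  ext i j
  simp [conjTranspose_apply, Matrix.kroneckerMap_apply, star_mul']

lemma kron_psd {A B : Matrix (Fin 2) (Fin 2) ℂ} (hA : A.PosSemidef) (hB : B.PosSemidef) :
    (A ⊗ₖ B).PosSemidef := by
  exact hA.kronecker hB

lemma kron_quad (A B : Matrix (Fin 2) (Fin 2) ℂ) (ψ φ : Fin 2 → ℂ) :
    star (fun p : Fin 2 × Fin 2 => ψ p.1 * φ p.2) ⬝ᵥ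
      (A ⊗ₖ B).mulVec (fun p : Fin 2 × Fin 2 => ψ p.1 * φ p.2)
      = (star ψ ⬝ᵥ A.mulVec ψ) * (star φ ⬝ᵥ B.mulVec φ) := by
  simp [dotProduct, Matrix.mulVec, Fintype.sum_prod_type, Fin.sum_univ_succ,
    Matrix.kroneckerMap_apply, star_mul', Pi.star_apply]
  ring

lemma norm_le_of_psd (w₀ : ℝ) (w : Fin 3 → ℝ)
    (h : ((w₀ : ℂ) • (1 : Matrix (Fin 2) (Fin 2) ℂ) + pauli fun i => (w i : ℂ)).PosSemidef) :
    Real.sqrt (∑ i, w i ^ 2) ≤ w₀ := by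
  set r := Real.sqrt (∑ i, w i ^ 2) with hrdef
  have hr0 : 0 ≤ r := Real.sqrt_nonneg _
  have hr2 : r ^ 2 = ∑ i, w i ^ 2 := Real.sq_sqrt (by positivity)
  rcases eq_or_lt_of_le hr0 with h0 | h0
  · have hsum : (∑ i, w i ^ 2) = 0 := by rw [← hr2, ← h0]; ring
    have ha : ∀ i, w i = 0 := by
      intro i
      have h1 := Finset.sum_eq_zero_iff_of_nonneg
        (fun i (_ : i ∈ Finset.univ) => sq_nonneg (w i)) |>.mp hsum i (Finset.mem_univ i)
      exact pow_eq_zero_iff (by norm_num) |>.mp h1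
    have hf : star ![(1 : ℂ), 0] ⬝ᵥ
        ((w₀ : ℂ) • (1 : Matrix (Fin 2) (Fin 2) ℂ) + pauli fun i => (w i : ℂ)).mulVec ![1, 0]
        = ((w₀ * 1 : ℝ) : ℂ) := by
      rw [pauli_zero w ha]
      simp [Matrix.mulVec, dotProduct, Fin.sum_univ_succ, Matrix.one_apply]
    have := psd_form_aux h _ w₀ 1 hf one_pos
    linarith
  · by_cases hsign : 0 ≤ w 2
    · set ψ : Fin 2 → ℂ := ![(w 0 : ℂ) - I * w 1, -((w 2 : ℂ) + r)] with hψ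
      have hnpos : 0 < w 0 ^ 2 + w 1 ^ 2 + (w 2 + r) ^ 2 := by
        nlinarith [sq_nonneg (w 0), sq_nonneg (w 1)]
      have hf : star ψ ⬝ᵥ
          ((w₀ : ℂ) • (1 : Matrix (Fin 2) (Fin 2) ℂ) + pauli fun i => (w i : ℂ)).mulVec ψ
          = (((w₀ - r) * (w 0 ^ 2 + w 1 ^ 2 + (w 2 + r) ^ 2) : ℝ) : ℂ) := by
        rw [Matrix.add_mulVec, Matrix.smul_mulVec, Matrix.one_mulVec, hψ,
          eig1 w r hr2, dotProduct_add, dotProduct_smul, dotProduct_smul, dot1 w r]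
        push_cast
        simp only [smul_eq_mul]
        ring
      have := psd_form_aux h ψ (w₀ - r) _ hf hnpos
      linarith
    · set ψ : Fin 2 → ℂ := ![(r : ℂ) - w 2, -((w 0 : ℂ) + I * w 1)] with hψ
      have hnpos : 0 < w 0 ^ 2 + w 1 ^ 2 + (r - w 2) ^ 2 := by
        nlinarith [sq_nonneg (w 0), sq_nonneg (w 1)]
      have hf : star ψ ⬝ᵥ
          ((w₀ : ℂ) • (1 : Matrix (Fin 2) (Fin 2) ℂ) + pauli fun i => (w i : ℂ)).mulVec ψ
          = (((w₀ - r) * (w 0 ^ 2 + w 1 ^ 2 + (r - w 2) ^ 2) : ℝ) : ℂ) := by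
        rw [Matrix.add_mulVec, Matrix.smul_mulVec, Matrix.one_mulVec, hψ,
          eig2 w r hr2, dotProduct_add, dotProduct_smul, dotProduct_smul, dot2 w r]
        push_cast
        simp only [smul_eq_mul]
        ring
      have := psd_form_aux h ψ (w₀ - r) _ hf hnpos
      linarith

/-- The map `Δ` determined by the 3×3 real matrix `B`, given on the decomposition
`x = w₀ I + w·σ` (with real coefficients) by
`Δ(x) = w₀ (I⊗I) + (Bw·σ)⊗I + I⊗(Bw·σ)`. -/
noncomputable def DeltaB (B : Matrix (Fin 3) (Fin 3) ℝ) (w₀ : ℝ) (w : Fin 3 → ℝ) :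
    Matrix (Fin 2 × Fin 2) (Fin 2 × Fin 2) ℂ :=
  (w₀ : ℂ) • ((1 : Matrix (Fin 2) (Fin 2) ℂ) ⊗ₖ (1 : Matrix (Fin 2) (Fin 2) ℂ))
    + pauli (fun i => (B.mulVec w i : ℂ)) ⊗ₖ (1 : Matrix (Fin 2) (Fin 2) ℂ)
    + (1 : Matrix (Fin 2) (Fin 2) ℂ) ⊗ₖ pauli (fun i => (B.mulVec w i : ℂ))

theorem stmt_6 (B : Matrix (Fin 3) (Fin 3) ℝ) :
    (∀ (w₀ : ℝ) (w : Fin 3 → ℝ),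
        ((w₀ : ℂ) • (1 : Matrix (Fin 2) (Fin 2) ℂ) + pauli (fun i => (w i : ℂ))).PosSemidef →
          (DeltaB B w₀ w).PosSemidef) ↔
      ∀ w : Fin 3 → ℝ,
        Real.sqrt (∑ i, B.mulVec w i ^ 2) ≤ (1 / 2) * Real.sqrt (∑ i, w i ^ 2) := by
  constructor
  · intro h w
    set r := Real.sqrt (∑ i, w i ^ 2) with hrdef
    have hr0 : 0 ≤ r := Real.sqrt_nonneg _
    set v : Fin 3 → ℝ := B.mulVec w with hv
    set s := Real.sqrt (∑ i, v i ^ 2) with hsdef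
    have hs0 : 0 ≤ s := Real.sqrt_nonneg _
    have hs2 : s ^ 2 = ∑ i, v i ^ 2 := Real.sq_sqrt (by positivity)
    have hΔ := h r w (psd_of_norm_le r w le_rfl)
    have hΔ' : ((r : ℂ) • ((1 : Matrix (Fin 2) (Fin 2) ℂ) ⊗ₖ (1 : Matrix (Fin 2) (Fin 2) ℂ))
        + pauli (fun i => (v i : ℂ)) ⊗ₖ (1 : Matrix (Fin 2) (Fin 2) ℂ)
        + (1 : Matrix (Fin 2) (Fin 2) ℂ) ⊗ₖ pauli (fun i => (v i : ℂ))).PosSemidef := by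
      rw [hv]
      exact hΔ
    rcases eq_or_lt_of_le hs0 with h0 | h0
    · rw [← h0]; linarith
    · by_cases hsign : 0 ≤ v 2
      · set ψ : Fin 2 → ℂ := ![(v 0 : ℂ) - I * v 1, -((v 2 : ℂ) + s)] with hψ
        have hnpos : 0 < v 0 ^ 2 + v 1 ^ 2 + (v 2 + s) ^ 2 := by
          nlinarith [sq_nonneg (v 0), sq_nonneg (v 1)]
        have hq1 : star ψ ⬝ᵥ (1 : Matrix (Fin 2) (Fin 2) ℂ).mulVec ψ
            = ((v 0 ^ 2 + v 1 ^ 2 + (v 2 + s) ^ 2 : ℝ) : ℂ) := by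
          rw [Matrix.one_mulVec, hψ, dot1 v s]
        have hqP : star ψ ⬝ᵥ (pauli fun i => (v i : ℂ)).mulVec ψ
            = ((-s * (v 0 ^ 2 + v 1 ^ 2 + (v 2 + s) ^ 2) : ℝ) : ℂ) := by
          rw [hψ, eig1 v s hs2, dotProduct_smul, dot1 v s]
          push_cast
          simp only [smul_eq_mul]
          try ring
        have hf : star (fun p : Fin 2 × Fin 2 => ψ p.1 * ψ p.2) ⬝ᵥ
            ((r : ℂ) • ((1 : Matrix (Fin 2) (Fin 2) ℂ) ⊗ₖ (1 : Matrix (Fin 2) (Fin 2) ℂ))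
              + pauli (fun i => (v i : ℂ)) ⊗ₖ (1 : Matrix (Fin 2) (Fin 2) ℂ)
              + (1 : Matrix (Fin 2) (Fin 2) ℂ) ⊗ₖ pauli (fun i => (v i : ℂ))).mulVec
              (fun p : Fin 2 × Fin 2 => ψ p.1 * ψ p.2)
            = (((r - 2 * s) * ((v 0 ^ 2 + v 1 ^ 2 + (v 2 + s) ^ 2)
                * (v 0 ^ 2 + v 1 ^ 2 + (v 2 + s) ^ 2)) : ℝ) : ℂ) := by
          rw [Matrix.add_mulVec, Matrix.add_mulVec, Matrix.smul_mulVec,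
            dotProduct_add, dotProduct_add, dotProduct_smul,
            kron_quad, kron_quad, kron_quad, hq1, hqP]
          push_cast
          simp only [smul_eq_mul]
          try ring
        have := psd_form_aux hΔ' _ (r - 2 * s) _ hf (by positivity)
        linarith
      · set ψ : Fin 2 → ℂ := ![(s : ℂ) - v 2, -((v 0 : ℂ) + I * v 1)] with hψ
        have hnpos : 0 < v 0 ^ 2 + v 1 ^ 2 + (s - v 2) ^ 2 := by
          nlinarith [sq_nonneg (v 0), sq_nonneg (v 1)]
        have hq1 : star ψ ⬝ᵥ (1 : Matrix (Fin 2) (Fin 2) ℂ).mulVec ψ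
            = ((v 0 ^ 2 + v 1 ^ 2 + (s - v 2) ^ 2 : ℝ) : ℂ) := by
          rw [Matrix.one_mulVec, hψ, dot2 v s]
        have hqP : star ψ ⬝ᵥ (pauli fun i => (v i : ℂ)).mulVec ψ
            = ((-s * (v 0 ^ 2 + v 1 ^ 2 + (s - v 2) ^ 2) : ℝ) : ℂ) := by
          rw [hψ, eig2 v s hs2, dotProduct_smul, dot2 v s]
          push_cast
          simp only [smul_eq_mul]
          try ring
        have hf : star (fun p : Fin 2 × Fin 2 => ψ p.1 * ψ p.2) ⬝ᵥ
            ((r : ℂ) • ((1 : Matrix (Fin 2) (Fin 2) ℂ) ⊗ₖ (1 : Matrix (Fin 2) (Fin 2) ℂ))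
              + pauli (fun i => (v i : ℂ)) ⊗ₖ (1 : Matrix (Fin 2) (Fin 2) ℂ)
              + (1 : Matrix (Fin 2) (Fin 2) ℂ) ⊗ₖ pauli (fun i => (v i : ℂ))).mulVec
              (fun p : Fin 2 × Fin 2 => ψ p.1 * ψ p.2)
            = (((r - 2 * s) * ((v 0 ^ 2 + v 1 ^ 2 + (s - v 2) ^ 2)
                * (v 0 ^ 2 + v 1 ^ 2 + (s - v 2) ^ 2)) : ℝ) : ℂ) := by
          rw [Matrix.add_mulVec, Matrix.add_mulVec, Matrix.smul_mulVec,
            dotProduct_add, dotProduct_add, dotProduct_smul,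
            kron_quad, kron_quad, kron_quad, hq1, hqP]
          push_cast
          simp only [smul_eq_mul]
          ring
        have := psd_form_aux hΔ' _ (r - 2 * s) _ hf (by positivity)
        linarith
  · intro hB w₀ w hpsd
    have hw : Real.sqrt (∑ i, w i ^ 2) ≤ w₀ := norm_le_of_psd w₀ w hpsd
    have hv : Real.sqrt (∑ i, B.mulVec w i ^ 2) ≤ w₀ / 2 := by
      have := hB w
      have h2 : (0 : ℝ) ≤ Real.sqrt (∑ i, w i ^ 2) := Real.sqrt_nonneg _
      linarith
    have hA : (((w₀ / 2 : ℝ) : ℂ) • (1 : Matrix (Fin 2) (Fin 2) ℂ)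
        + pauli fun i => ((B.mulVec w i : ℝ) : ℂ)).PosSemidef :=
      psd_of_norm_le _ _ hv
    have hdec : DeltaB B w₀ w
        = (((w₀ / 2 : ℝ) : ℂ) • (1 : Matrix (Fin 2) (Fin 2) ℂ)
            + pauli fun i => ((B.mulVec w i : ℝ) : ℂ)) ⊗ₖ (1 : Matrix (Fin 2) (Fin 2) ℂ)
          + (1 : Matrix (Fin 2) (Fin 2) ℂ) ⊗ₖ (((w₀ / 2 : ℝ) : ℂ) • (1 : Matrix (Fin 2) (Fin 2) ℂ)
            + pauli fun i => ((B.mulVec w i : ℝ) : ℂ)) := by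
      rw [DeltaB, Matrix.add_kronecker, Matrix.kronecker_add, Matrix.smul_kronecker,
        Matrix.kronecker_smul]
      push_cast
      module
    rw [hdec]
    exact (kron_psd hA Matrix.PosSemidef.one).add (kron_psd Matrix.PosSemidef.one hA)
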